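/- For every integer i, the quotient k[s]-module 𝔅'/𝔅_i is isomorphic to the direct sum, over all integers j ≠ i, of the skyscraper modules k[s]/(s−j); explicitly, the classes of the generators 1/(s−j) for j ≠ i induce an isomorphism ⊕_{j∈ℤ, j≠i} k[s]/(s−j) ≅ 𝔅'/𝔅_i. -/

import Mathlib

open TensorProduct DirectSum Polynomial

noncomputable def Bprime (k : Type*) [Field k] : Submodule (Polynomial k) (RatFunc k) :=
  Submodule.span (Polynomial k) {x : RatFunc k | ∃ i : ℤ, x = (RatFunc.X + (i : RatFunc k))⁻¹}

noncomputable section ResidueAux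

variable {k : Type*} [Field k]

private def myres (a : k) : RatFunc k →+ k where
  toFun f := ((RatFunc.laurent a f : RatFunc k) : LaurentSeries k).coeff (-1)
  map_zero' := by simp
  map_add' f g := by
    rw [map_add, map_add, HahnSeries.coeff_add]

private lemma laurent_term (a c : k) (p : Polynomial k) :
    RatFunc.laurent a (algebraMap (Polynomial k) (RatFunc k) p *
        (RatFunc.X - RatFunc.C c)⁻¹) =
      algebraMap (Polynomial k) (RatFunc k) (taylor a p) *
        (RatFunc.X + RatFunc.C (a - c))⁻¹ := by
  rw [map_mul, RatFunc.laurent_algebraMap, map_inv₀, map_sub, RatFunc.laurent_X,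
    RatFunc.laurent_C, map_sub]
  ring_nf

private lemma coe_algebraMap_ratfunc (p : Polynomial k) :
    ((algebraMap (Polynomial k) (RatFunc k) p : RatFunc k) : LaurentSeries k)
      = ((p : PowerSeries k) : LaurentSeries k) := by
  rw [RatFunc.coe_coe]
  rfl

private lemma myres_self (a : k) (p : Polynomial k) :
    myres a (algebraMap (Polynomial k) (RatFunc k) p * (RatFunc.X - RatFunc.C a)⁻¹)
      = p.eval a := by
  have h := laurent_term a a p
  simp only [sub_self, map_zero, add_zero] at h
  show ((RatFunc.laurent a _ : RatFunc k) : LaurentSeries k).coeff (-1) = _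
  rw [h, map_mul]
  have hXinv : (((RatFunc.X : RatFunc k)⁻¹ : RatFunc k) : LaurentSeries k) =
      HahnSeries.single (-1 : ℤ) (1 : k) := by
    rw [map_inv₀, RatFunc.coe_X]
    refine inv_eq_of_mul_eq_one_right ?_
    rw [HahnSeries.single_mul_single, one_mul, add_neg_cancel, HahnSeries.single_zero_one]
  rw [hXinv, coe_algebraMap_ratfunc]
  have := HahnSeries.coeff_mul_single_add
    (r := (1:k)) (x := ((taylor a p : PowerSeries k) : LaurentSeries k)) (a := (0:ℤ)) (b := (-1:ℤ))
  rw [zero_add] at this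
  rw [this, mul_one, PowerSeries.coeff_coe]
  show (PowerSeries.coeff 0 (taylor a p : PowerSeries k)) = _
  rw [Polynomial.coeff_coe, taylor_coeff_zero]

private lemma myres_other (a c : k) (hac : a ≠ c) (p : Polynomial k) :
    myres a (algebraMap (Polynomial k) (RatFunc k) p * (RatFunc.X - RatFunc.C c)⁻¹)
      = 0 := by
  have h := laurent_term a c p
  show ((RatFunc.laurent a _ : RatFunc k) : LaurentSeries k).coeff (-1) = _
  rw [h, map_mul]
  set d : k := a - c with hd
  have hd0 : d ≠ 0 := sub_ne_zero_of_ne hac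
  have hP : (RatFunc.X + RatFunc.C d : RatFunc k) =
      algebraMap (Polynomial k) (RatFunc k) (X + C d) := by
    rw [map_add, RatFunc.algebraMap_X, RatFunc.algebraMap_C]
  have hconst : PowerSeries.constantCoeff ((X + C d : Polynomial k) : PowerSeries k) ≠ 0 := by
    rw [Polynomial.constantCoeff_coe]
    simpa using hd0
  have hinv : (((RatFunc.X + RatFunc.C d : RatFunc k)⁻¹ : RatFunc k) : LaurentSeries k)
      = ((((X + C d : Polynomial k) : PowerSeries k)⁻¹ : PowerSeries k) : LaurentSeries k) := by
    rw [map_inv₀, hP, coe_algebraMap_ratfunc]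
    refine inv_eq_of_mul_eq_one_right ?_
    rw [← PowerSeries.coe_mul, PowerSeries.mul_inv_cancel _ hconst, PowerSeries.coe_one]
  rw [hinv, coe_algebraMap_ratfunc, ← PowerSeries.coe_mul, PowerSeries.coeff_coe]
  simp

/-- cast of an integer into `RatFunc` as `C`. -/
private lemma intCast_ratfunc (j : ℤ) : ((j : ℤ) : RatFunc k) = RatFunc.C ((j : ℤ) : k) :=
  (map_intCast (RatFunc.C : k →+* RatFunc k) j).symm

private lemma intCast_poly (j : ℤ) : ((j : ℤ) : Polynomial k) = C ((j : ℤ) : k) :=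
  (map_intCast (Polynomial.C : k →+* Polynomial k) j).symm

end ResidueAux

set_option maxHeartbeats 2000000 in
theorem stmt7 (k : Type*) [Field k] [CharZero k] (i : ℤ)
    (hmem : ∀ j : ℤ, ((RatFunc.X : RatFunc k) - (j : RatFunc k))⁻¹ ∈ Bprime k) :
    ∃ e : (⨁ j : {j : ℤ // j ≠ i},
          Polynomial k ⧸ Ideal.span {Polynomial.X - ((j : ℤ) : Polynomial k)})
        ≃ₗ[Polynomial k]
        (↥(Bprime k) ⧸ Submodule.span (Polynomial k)
          {(⟨((RatFunc.X : RatFunc k) - (i : RatFunc k))⁻¹, hmem i⟩ : ↥(Bprime k))}),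
      ∀ j : {j : ℤ // j ≠ i},
        e (DirectSum.of
            (fun j : {j : ℤ // j ≠ i} =>
              Polynomial k ⧸ Ideal.span {Polynomial.X - ((j : ℤ) : Polynomial k)}) j
            (Ideal.Quotient.mk (Ideal.span {Polynomial.X - ((j : ℤ) : Polynomial k)}) 1)) =
          Submodule.Quotient.mk
            (⟨((RatFunc.X : RatFunc k) - ((j : ℤ) : RatFunc k))⁻¹, hmem j⟩ : ↥(Bprime k)) := by
  classical
  set gen : ℤ → ↥(Bprime k) :=
    fun j => ⟨((RatFunc.X : RatFunc k) - (j : RatFunc k))⁻¹, hmem j⟩ with hgen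
  set Bi : Submodule (Polynomial k) ↥(Bprime k) :=
    Submodule.span (Polynomial k) {gen i} with hBi
  -- basic nonvanishing
  have hne : ∀ j : ℤ, ((RatFunc.X : RatFunc k) - (j : RatFunc k)) ≠ 0 := by
    intro j
    rw [intCast_ratfunc, ← RatFunc.algebraMap_X, ← RatFunc.algebraMap_C, ← map_sub]
    exact (map_ne_zero_iff _
      (IsFractionRing.injective (Polynomial k) (RatFunc k))).mpr (X_sub_C_ne_zero _)
  have halg : ∀ j : ℤ, algebraMap (Polynomial k) (RatFunc k) (X - ((j : ℤ) : Polynomial k))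
      = (RatFunc.X : RatFunc k) - (j : RatFunc k) := by
    intro j
    rw [map_sub, RatFunc.algebraMap_X, map_intCast]
  have hval : ∀ j : ℤ, (((X - ((j : ℤ) : Polynomial k) : Polynomial k) • gen j : ↥(Bprime k))
      : RatFunc k) = 1 := by
    intro j
    rw [Submodule.coe_smul, hgen]
    show (X - ((j : ℤ) : Polynomial k) : Polynomial k) •
      (((RatFunc.X : RatFunc k) - (j : RatFunc k))⁻¹) = 1
    rw [Algebra.smul_def, halg j, mul_inv_cancel₀ (hne j)]
  have hone_mem : (1 : RatFunc k) ∈ Bprime k := by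
    have := ((X - ((i : ℤ) : Polynomial k) : Polynomial k) • gen i).2
    rwa [hval i] at this
  have hone_in_Bi : (⟨1, hone_mem⟩ : ↥(Bprime k)) ∈ Bi := by
    have h1 : (X - ((i : ℤ) : Polynomial k) : Polynomial k) • gen i ∈ Bi :=
      Submodule.smul_mem _ _ (Submodule.mem_span_singleton_self _)
    have h2 : (X - ((i : ℤ) : Polynomial k) : Polynomial k) • gen i
        = (⟨1, hone_mem⟩ : ↥(Bprime k)) := Subtype.ext (hval i)
    rwa [h2] at h1
  have hgen_smul_zero : ∀ j : ℤ,
      (X - ((j : ℤ) : Polynomial k) : Polynomial k) • (Submodule.Quotient.mk (gen j) :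
        ↥(Bprime k) ⧸ Bi) = 0 := by
    intro j
    rw [← Submodule.Quotient.mk_smul, Submodule.Quotient.mk_eq_zero]
    have h2 : (X - ((j : ℤ) : Polynomial k) : Polynomial k) • gen j
        = (⟨1, hone_mem⟩ : ↥(Bprime k)) := Subtype.ext (hval j)
    rw [h2]; exact hone_in_Bi
  -- component maps
  set φ : ∀ j : {j : ℤ // j ≠ i},
      (Polynomial k ⧸ Ideal.span {Polynomial.X - ((j : ℤ) : Polynomial k)})
        →ₗ[Polynomial k] (↥(Bprime k) ⧸ Bi) := fun j =>
    Submodule.liftQ (Ideal.span {Polynomial.X - ((j : ℤ) : Polynomial k)})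
      (LinearMap.toSpanSingleton (Polynomial k) _ (Submodule.Quotient.mk (gen j)))
      (by
        rw [Ideal.span_le, Set.singleton_subset_iff, SetLike.mem_coe, LinearMap.mem_ker,
          LinearMap.toSpanSingleton_apply]
        exact hgen_smul_zero (j : ℤ)) with hφ
  set Φ : (⨁ j : {j : ℤ // j ≠ i},
      Polynomial k ⧸ Ideal.span {Polynomial.X - ((j : ℤ) : Polynomial k)})
        →ₗ[Polynomial k] (↥(Bprime k) ⧸ Bi) :=
    DirectSum.toModule (Polynomial k) _ _ φ with hΦ
  have key : ∀ j : {j : ℤ // j ≠ i}, ∀ q : Polynomial k,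
      Φ (DirectSum.of _ j (Ideal.Quotient.mk _ q)) =
        Submodule.Quotient.mk (q • gen (j : ℤ)) := by
    intro j q
    rw [hΦ, ← DirectSum.lof_eq_of (Polynomial k), DirectSum.toModule_lof, hφ]
    show Submodule.liftQ _ _ _ (Submodule.Quotient.mk q) = _
    rw [Submodule.liftQ_apply, LinearMap.toSpanSingleton_apply, Submodule.Quotient.mk_smul]
  -- surjectivity
  have hsurj : Function.Surjective Φ := by
    intro y
    obtain ⟨⟨v, hv⟩, rfl⟩ := Submodule.Quotient.mk_surjective _ y
    induction hv using Submodule.span_induction with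
    | mem x hx =>
      obtain ⟨i', rfl⟩ := hx
      have hx' : ((RatFunc.X : RatFunc k) + ((i' : ℤ) : RatFunc k))⁻¹
          = ((RatFunc.X : RatFunc k) - (((-i' : ℤ) : ℤ) : RatFunc k))⁻¹ := by
        rw [Int.cast_neg, sub_neg_eq_add]
      by_cases hii : -i' = i
      · refine ⟨0, ?_⟩
        rw [map_zero]
        symm
        rw [Submodule.Quotient.mk_eq_zero]
        have h2 : (⟨((RatFunc.X : RatFunc k) + ((i' : ℤ) : RatFunc k))⁻¹, Submodule.subset_span ⟨i', rfl⟩⟩ : ↥(Bprime k)) = gen i :=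
          Subtype.ext (show ((RatFunc.X : RatFunc k) + ((i' : ℤ) : RatFunc k))⁻¹
            = ((RatFunc.X : RatFunc k) - ((i : ℤ) : RatFunc k))⁻¹ by rw [hx', hii])
        rw [h2]
        exact Submodule.mem_span_singleton_self _
      · refine ⟨DirectSum.of _ (⟨-i', hii⟩ : {j : ℤ // j ≠ i}) (Ideal.Quotient.mk _ 1), ?_⟩
        rw [key ⟨-i', hii⟩ 1, one_smul]
        exact congrArg _ (Subtype.ext hx'.symm)
    | zero =>
      refine ⟨0, ?_⟩
      rw [map_zero]
      exact (congrArg _ (Subtype.ext (rfl : (0 : RatFunc k) = 0).symm)).trans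
        (Submodule.Quotient.mk_zero _) |>.symm
    | add x y hx hy ihx ihy =>
      obtain ⟨zx, hzx⟩ := ihx
      obtain ⟨zy, hzy⟩ := ihy
      refine ⟨zx + zy, ?_⟩
      rw [map_add, hzx, hzy, ← Submodule.Quotient.mk_add]
      rfl
    | smul c x hx ihx =>
      obtain ⟨zx, hzx⟩ := ihx
      refine ⟨c • zx, ?_⟩
      rw [map_smul, hzx, ← Submodule.Quotient.mk_smul]
      rfl
  -- injectivity
  have hker : ∀ x, Φ x = 0 → x = 0 := by
    intro x hx
    choose p hp using fun j : {j : ℤ // j ≠ i} =>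
      Ideal.Quotient.mk_surjective
        (I := Ideal.span {Polynomial.X - ((j : ℤ) : Polynomial k)}) (x j)
    set s := DFinsupp.support x with hs
    have hΦx : Φ x = Submodule.Quotient.mk (∑ j ∈ s, p j • gen (j : ℤ)) := by
      conv_lhs => rw [← DirectSum.sum_support_of x]
      rw [map_sum, ← Submodule.mkQ_apply, map_sum]
      refine Finset.sum_congr rfl fun j hj => ?_
      rw [Submodule.mkQ_apply, ← hp j, key j (p j)]
    rw [hΦx, Submodule.Quotient.mk_eq_zero, hBi, Submodule.mem_span_singleton] at hx
    obtain ⟨q, hq⟩ := hx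
    have h0 := congrArg Subtype.val hq
    simp only [hgen, AddSubmonoidClass.coe_finset_sum, SetLike.val_smul] at h0
    -- h0 : q • (X - i)⁻¹ = ∑ j in s, p j • (X - j)⁻¹   (in RatFunc k)
    have heval : ∀ j0 ∈ s, (p j0).eval (((j0 : ℤ) : ℤ) : k) = 0 := by
      intro j0 hj0
      have happ := congrArg (myres ((((j0 : {j : ℤ // j ≠ i}) : ℤ) : ℤ) : k)) h0
      rw [map_sum] at happ
      have hL : myres ((((j0 : {j : ℤ // j ≠ i}) : ℤ) : ℤ) : k)
          (q • ((RatFunc.X : RatFunc k) - ((i : ℤ) : RatFunc k))⁻¹) = 0 := by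
        rw [Algebra.smul_def, intCast_ratfunc]
        exact myres_other _ _ (fun hcast => j0.2 (Int.cast_injective hcast)) q
      have hR : ∑ j ∈ s, myres ((((j0 : {j : ℤ // j ≠ i}) : ℤ) : ℤ) : k)
          (p j • ((RatFunc.X : RatFunc k) - (((j : ℤ) : ℤ) : RatFunc k))⁻¹)
          = (p j0).eval (((j0 : ℤ) : ℤ) : k) := by
        refine Finset.sum_eq_single_of_mem j0 hj0 ?_ |>.trans ?_
        · intro j hjs hne'
          rw [Algebra.smul_def, intCast_ratfunc]
          refine myres_other _ _ ?_ (p j)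
          intro hcast
          exact hne' (Subtype.ext (Int.cast_injective hcast).symm)
        · rw [Algebra.smul_def, intCast_ratfunc]
          exact myres_self _ (p j0)
      rw [hL, hR] at happ
      exact happ.symm
    have hzero : ∀ j0 ∈ s, x j0 = 0 := by
      intro j0 hj0
      rw [← hp j0, Ideal.Quotient.eq_zero_iff_mem, Ideal.mem_span_singleton, intCast_poly]
      exact dvd_iff_isRoot.mpr (heval j0 hj0)
    refine DFinsupp.ext fun j => ?_
    by_cases hjs : j ∈ s
    · exact hzero j hjs
    · exact DFinsupp.notMem_support_iff.mp hjs
  have hinj : Function.Injective Φ := by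
    intro a b hab
    have h := hker (a - b) (by rw [map_sub, hab, sub_self])
    exact sub_eq_zero.mp h
  refine ⟨LinearEquiv.ofBijective Φ (⟨hinj, hsurj⟩ : Function.Bijective Φ), fun j => ?_⟩
  exact (key j 1).trans (congrArg _ (one_smul _ _))
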